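/- arXiv:math/0607653 — 2 statements merged into one kernel-verified Lean document; each statement's English description precedes it below -/
import Mathlib

section
/- Let λ be a real number with λ > 0 and λ ≠ 1, and let m ≥ 1 and n ≥ 0 be integers. Then m·B_n(λ) = ∑_{j=0}^{n} C(n,j)·B_j(λ^m)·m^j·∑_{a=0}^{m−1} λ^a·a^{n−j}, with the convention 0^0 = 1 (Gauss multiplicative formula for λ-Bernoulli numbers). -/
/-- The λ-Bernoulli numbers `B_n(λ)`, defined by `B_0(λ) = Log λ / (λ - 1)` and, for `n ≥ 1`,
by the recurrence `λ·∑_{k=0}^{n} C(n,k)·B_k(λ) - B_n(λ) = (1 if n = 1, 0 if n ≥ 2)`,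
encoding the generating function `(Log λ + t)/(λ e^t - 1) = ∑ B_n(λ) t^n/n!`. -/
noncomputable def lambdaBernoulli (lam : ℂ) : ℕ → ℂ
  | 0 => Complex.log lam / (lam - 1)
  | n + 1 =>
      ((if n = 0 then (1 : ℂ) else 0) -
        lam * ∑ k : Fin (n + 1), ((n + 1).choose (k : ℕ) : ℂ) * lambdaBernoulli lam k) / (lam - 1)

noncomputable def lbS (lam : ℂ) (m r : ℕ) : ℂ := ∑ a ∈ Finset.range m, lam ^ a * (a : ℂ) ^ r

noncomputable def lbG (lam : ℂ) (m n : ℕ) : ℂ :=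
  ∑ j ∈ Finset.range (n + 1),
    (n.choose j : ℂ) * lambdaBernoulli (lam ^ m) j * (m : ℂ) ^ j * lbS lam m (n - j)

lemma lb_rec (lam : ℂ) (h : lam - 1 ≠ 0) (n : ℕ) :
    (lam - 1) * lambdaBernoulli lam (n + 1) =
      (if n = 0 then (1 : ℂ) else 0) -
        lam * ∑ k ∈ Finset.range (n + 1), ((n + 1).choose k : ℂ) * lambdaBernoulli lam k := by
  rw [lambdaBernoulli, ← Fin.sum_univ_eq_sum_range
    (fun k => ((n + 1).choose k : ℂ) * lambdaBernoulli lam k) (n + 1)]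
  field_simp

lemma lb_rec' (lam : ℂ) (h : lam - 1 ≠ 0) (n : ℕ) (hn : 1 ≤ n) :
    lam * ∑ k ∈ Finset.range (n + 1), (n.choose k : ℂ) * lambdaBernoulli lam k -
      lambdaBernoulli lam n = if n = 1 then 1 else 0 := by
  obtain ⟨n', rfl⟩ : ∃ n', n = n' + 1 := ⟨n - 1, by omega⟩
  have h0 := lb_rec lam h n'
  rw [Finset.sum_range_succ, Nat.choose_self]
  have hif : (if n' + 1 = 1 then (1 : ℂ) else 0) = (if n' = 0 then 1 else 0) := by
    by_cases h' : n' = 0 <;> simp [h']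
  rw [hif]
  push_cast
  linear_combination h0

lemma lbA (lam : ℂ) (m R : ℕ) :
    ∑ r ∈ Finset.range (R + 1), (R.choose r : ℂ) * lbS lam m r =
      ∑ a ∈ Finset.range m, lam ^ a * ((a : ℂ) + 1) ^ R := by
  simp only [lbS, Finset.mul_sum]
  rw [Finset.sum_comm]
  refine Finset.sum_congr rfl fun a _ => ?_
  rw [add_pow]
  simp [Finset.mul_sum]
  ring_nf
  refine Finset.sum_congr rfl fun r _ => ?_
  ring

lemma lbB (lam : ℂ) (m R : ℕ) :
    lam * ∑ a ∈ Finset.range m, lam ^ a * ((a : ℂ) + 1) ^ R =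
      lbS lam m R + lam ^ m * (m : ℂ) ^ R - (if R = 0 then 1 else 0) := by
  have h0 : ∑ b ∈ Finset.range (m + 1), lam ^ b * (b : ℂ) ^ R =
      (∑ a ∈ Finset.range m, lam ^ (a + 1) * ((a : ℕ) + 1 : ℂ) ^ R) +
        lam ^ 0 * ((0 : ℕ) : ℂ) ^ R := by
    rw [Finset.sum_range_succ']
    push_cast
    ring_nf
  rw [Finset.sum_range_succ] at h0
  have h1 : lam * ∑ a ∈ Finset.range m, lam ^ a * ((a : ℂ) + 1) ^ R
      = ∑ a ∈ Finset.range m, lam ^ (a + 1) * ((a : ℕ) + 1 : ℂ) ^ R := by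
    rw [Finset.mul_sum]
    refine Finset.sum_congr rfl fun a _ => ?_
    push_cast
    ring
  rw [h1]
  simp only [pow_zero, one_mul, Nat.cast_zero, zero_pow_eq] at h0
  rw [lbS]
  linear_combination -h0

lemma lbC (lam : ℂ) (m n : ℕ) :
    ∑ k ∈ Finset.range (n + 1), (n.choose k : ℂ) * lbG lam m k =
      ∑ j ∈ Finset.range (n + 1),
        (n.choose j : ℂ) * lambdaBernoulli (lam ^ m) j * (m : ℂ) ^ j *
          ∑ r ∈ Finset.range (n - j + 1), ((n - j).choose r : ℂ) * lbS lam m r := by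
  simp only [lbG, Finset.mul_sum]
  rw [Finset.sum_comm' (t' := Finset.range (n + 1)) (s' := fun j => Finset.Ico j (n + 1))
    (by intro k j; simp only [Finset.mem_range, Finset.mem_Ico]; omega)]
  refine Finset.sum_congr rfl fun j hj => ?_
  rw [Finset.mem_range] at hj
  rw [Finset.sum_Ico_eq_sum_range]
  have hnn : n + 1 - j = n - j + 1 := by omega
  rw [hnn]
  refine Finset.sum_congr rfl fun r hr => ?_
  rw [Finset.mem_range] at hr
  have hch : (n.choose (j + r) : ℂ) * ((j + r).choose j : ℂ) =
      (n.choose j : ℂ) * ((n - j).choose r : ℂ) := by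
    rw [← Nat.cast_mul, ← Nat.cast_mul, Nat.choose_mul (n := n) (by omega : j ≤ j + r),
      Nat.add_sub_cancel_left]
  rw [Nat.add_sub_cancel_left]
  linear_combination (lambdaBernoulli (lam ^ m) j * (m : ℂ) ^ j * lbS lam m r) * hch

lemma lbKey (lam : ℂ) (m : ℕ) (hμ : lam ^ m - 1 ≠ 0) (n : ℕ) (hn : 1 ≤ n) :
    lam * ∑ k ∈ Finset.range (n + 1), (n.choose k : ℂ) * lbG lam m k - lbG lam m n =
      if n = 1 then (m : ℂ) else 0 := by
  rw [lbC, Finset.mul_sum]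
  have step : ∀ j ∈ Finset.range (n + 1),
      lam * ((n.choose j : ℂ) * lambdaBernoulli (lam ^ m) j * (m : ℂ) ^ j *
          ∑ r ∈ Finset.range (n - j + 1), ((n - j).choose r : ℂ) * lbS lam m r) =
        (n.choose j : ℂ) * lambdaBernoulli (lam ^ m) j * (m : ℂ) ^ j * lbS lam m (n - j)
        + lam ^ m * (m : ℂ) ^ n * ((n.choose j : ℂ) * lambdaBernoulli (lam ^ m) j)
        - (if j = n then (n.choose j : ℂ) * lambdaBernoulli (lam ^ m) j * (m : ℂ) ^ j else 0) := by
    intro j hj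
    rw [Finset.mem_range] at hj
    have hb := lbB lam m (n - j)
    rw [← lbA] at hb
    have hpow : (m : ℂ) ^ j * (m : ℂ) ^ (n - j) = (m : ℂ) ^ n := by
      rw [← pow_add]; congr 1; omega
    by_cases h : j = n
    · subst h
      simp only [Nat.sub_self, eq_self_iff_true, if_true, pow_zero, mul_one] at hb ⊢
      linear_combination ((j.choose j : ℂ) * lambdaBernoulli (lam ^ m) j * (m : ℂ) ^ j) * hb
    · rw [if_neg (by omega : ¬ n - j = 0)] at hb
      rw [if_neg h]
      linear_combination ((n.choose j : ℂ) * lambdaBernoulli (lam ^ m) j * (m : ℂ) ^ j) * hb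
        + (n.choose j : ℂ) * lambdaBernoulli (lam ^ m) j * lam ^ m * hpow
  rw [Finset.sum_congr rfl step, Finset.sum_sub_distrib, Finset.sum_add_distrib]
  rw [Finset.sum_ite_eq' (Finset.range (n + 1)) n
    (fun j => (n.choose j : ℂ) * lambdaBernoulli (lam ^ m) j * (m : ℂ) ^ j)]
  rw [if_pos (Finset.self_mem_range_succ n), Nat.choose_self]
  have hrec := lb_rec' (lam ^ m) hμ n hn
  have hG : lbG lam m n = ∑ j ∈ Finset.range (n + 1),
      (n.choose j : ℂ) * lambdaBernoulli (lam ^ m) j * (m : ℂ) ^ j * lbS lam m (n - j) := rfl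
  have hsum : ∑ j ∈ Finset.range (n + 1),
      lam ^ m * (m : ℂ) ^ n * ((n.choose j : ℂ) * lambdaBernoulli (lam ^ m) j) =
      lam ^ m * (m : ℂ) ^ n *
        ∑ j ∈ Finset.range (n + 1), (n.choose j : ℂ) * lambdaBernoulli (lam ^ m) j := by
    rw [Finset.mul_sum]
  rw [hsum, ← hG]
  have hfin : (if n = 1 then (m : ℂ) else 0) = (m : ℂ) ^ n * (if n = 1 then 1 else 0) := by
    by_cases h : n = 1 <;> simp [h]
  rw [hfin]
  push_cast
  linear_combination (m : ℂ) ^ n * hrec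

/-- Gauss multiplicative formula for the λ-Bernoulli numbers: for real `λ > 0`,
`λ ≠ 1` and integers `m ≥ 1`, `n ≥ 0`,
`m·B_n(λ) = ∑_{j=0}^{n} C(n,j)·B_j(λ^m)·m^j·∑_{a=0}^{m-1} λ^a·a^{n-j}` (with `0^0 = 1`). -/
theorem lambdaBernoulli_gauss_multiplication (lam : ℝ) (hpos : 0 < lam) (h1 : lam ≠ 1)
    (m : ℕ) (hm : 1 ≤ m) (n : ℕ) :
    (m : ℂ) * lambdaBernoulli (lam : ℂ) n =
      ∑ j ∈ Finset.range (n + 1),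
        (n.choose j : ℂ) * lambdaBernoulli ((lam : ℂ) ^ m) j * (m : ℂ) ^ j *
          ∑ a ∈ Finset.range m, (lam : ℂ) ^ a * (a : ℂ) ^ (n - j) := by
  set L : ℂ := (lam : ℂ) with hL
  have hLne : L ≠ 1 := by
    rw [hL]; exact_mod_cast h1
  have hL1 : L - 1 ≠ 0 := sub_ne_zero.2 hLne
  have hμR : lam ^ m ≠ 1 := by
    rcases lt_or_gt_of_ne h1 with h | h
    · exact ne_of_lt (pow_lt_one₀ hpos.le h (by omega))
    · exact ne_of_gt (one_lt_pow₀ h (by omega))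
  have hμ1 : L ^ m - 1 ≠ 0 := by
    rw [hL]
    refine sub_ne_zero.2 ?_
    exact_mod_cast hμR
  have hlog : Complex.log (L ^ m) = (m : ℂ) * Complex.log L := by
    rw [hL, show ((lam : ℂ)) ^ m = ((lam ^ m : ℝ) : ℂ) by push_cast; ring,
      ← Complex.ofReal_log (pow_pos hpos m).le, ← Complex.ofReal_log hpos.le, Real.log_pow]
    push_cast
    ring
  have main : ∀ N, (m : ℂ) * lambdaBernoulli L N = lbG L m N := by
    intro N
    induction N using Nat.strong_induction_on with
    | _ N ih =>
      match N with
      | 0 =>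
        have hgeom : lbS L m 0 = (L ^ m - 1) / (L - 1) := by
          rw [lbS, ← geom_sum_eq hLne]
          simp
        show (m : ℂ) * lambdaBernoulli L 0 = lbG L m 0
        rw [lbG]
        rw [Finset.sum_range_one]
        simp only [Nat.choose_self, Nat.cast_one, one_mul, pow_zero, mul_one, Nat.sub_zero]
        rw [hgeom, show lambdaBernoulli (L ^ m) 0 = Complex.log (L ^ m) / (L ^ m - 1) by rw [lambdaBernoulli],
          show lambdaBernoulli L 0 = Complex.log L / (L - 1) by rw [lambdaBernoulli], hlog]
        field_simp
      | (n + 1) =>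
        have key := lbKey L m hμ1 (n + 1) (by omega)
        rw [Finset.sum_range_succ, Nat.choose_self] at key
        have hrec := lb_rec L hL1 n
        have hsum : ∑ k ∈ Finset.range (n + 1), ((n + 1).choose k : ℂ) * lbG L m k
            = (m : ℂ) * ∑ k ∈ Finset.range (n + 1),
                ((n + 1).choose k : ℂ) * lambdaBernoulli L k := by
          rw [Finset.mul_sum]
          refine Finset.sum_congr rfl fun k hk => ?_
          rw [Finset.mem_range] at hk
          rw [← ih k (by omega)]
          ring
        have hitem : (if n + 1 = 1 then (m : ℂ) else 0) = (m : ℂ) * (if n = 0 then 1 else 0) := by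
          by_cases h' : n = 0 <;> simp [h']
        rw [hsum, hitem] at key
        apply mul_left_cancel₀ hL1
        push_cast at key ⊢
        linear_combination (m : ℂ) * hrec - key
  rw [main n]
  simp only [lbG, lbS]
end

section
/- Let d ≥ 2 be an integer, χ a Dirichlet character modulo d, λ a real number with 0 < λ < 1, and k ≥ 1 an integer. Then L_λ(1 − k, χ) = −B_{k,χ}(λ)/k, i.e. the Dirichlet-type λ-L-function interpolates the generalized λ-Bernoulli numbers at non-positive integers. -/
open Finset in
private lemma aux_summable {d : ℕ} (χ : DirichletCharacter ℂ d) {lam : ℝ}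
    (h0 : 0 < lam) (h1 : lam < 1) (n : ℕ) :
    Summable (fun m : ℕ => χ ((m + 1 : ℕ) : ZMod d) * (lam : ℂ) ^ (m + 1) * ((m + 1 : ℕ) : ℂ) ^ n) := by
  have hb : Summable (fun m : ℕ => (m : ℝ) ^ n * lam ^ m) :=
    summable_pow_mul_geometric_of_norm_lt_one n (by rwa [Real.norm_eq_abs, abs_of_pos h0])
  have hg : Summable (fun m : ℕ => ((m + 1 : ℕ) : ℝ) ^ n * lam ^ (m + 1)) := by
    have := (summable_nat_add_iff (f := fun m : ℕ => (m : ℝ) ^ n * lam ^ m) 1).2 hb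
    simpa using this
  apply Summable.of_norm_bounded hg
  intro m
  rw [norm_mul, norm_mul, norm_pow, norm_pow, Complex.norm_real, Complex.norm_natCast,
    Real.norm_eq_abs, abs_of_pos h0]
  have hχ := χ.norm_le_one ((m + 1 : ℕ) : ZMod d)
  have h2 : (0:ℝ) ≤ lam ^ (m+1) * ((m + 1 : ℕ) : ℝ) ^ n := by positivity
  calc ‖χ ((m + 1 : ℕ) : ZMod d)‖ * lam ^ (m+1) * ((m + 1 : ℕ) : ℝ) ^ n
      ≤ 1 * lam ^ (m+1) * ((m + 1 : ℕ) : ℝ) ^ n := by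
        rw [mul_assoc, mul_assoc]; exact mul_le_mul_of_nonneg_right hχ h2
    _ = ((m + 1 : ℕ) : ℝ) ^ n * lam ^ (m+1) := by ring

private noncomputable def Tser {d : ℕ} (χ : DirichletCharacter ℂ d) (lam : ℝ) (n : ℕ) : ℂ :=
  ∑' m : ℕ, χ ((m + 1 : ℕ) : ZMod d) * (lam : ℂ) ^ (m + 1) * ((m + 1 : ℕ) : ℂ) ^ n

open Finset in
private lemma aux_chi_zero {d : ℕ} (hd : 2 ≤ d) (χ : DirichletCharacter ℂ d) :
    χ (0 : ZMod d) = 0 := by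
  haveI : Fact (1 < d) := ⟨by omega⟩
  exact χ.map_nonunit (by simpa using not_isUnit_zero)

open Finset in
private lemma aux_star {d : ℕ} (hd : 2 ≤ d) (χ : DirichletCharacter ℂ d) {lam : ℝ}
    (h0 : 0 < lam) (h1 : lam < 1) (n : ℕ) :
    (lam : ℂ) ^ d * ∑ k ∈ range (n + 1), (n.choose k : ℂ) * (d : ℂ) ^ (n - k) * Tser χ lam k
      = Tser χ lam n - ∑ j ∈ range d, χ (j : ZMod d) * (lam : ℂ) ^ j * (j : ℂ) ^ n := by
  set f : ℕ → ℕ → ℂ := fun k m => χ ((m + 1 : ℕ) : ZMod d) * (lam : ℂ) ^ (m + 1) * ((m + 1 : ℕ) : ℂ) ^ k with hf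
  have hsum : ∀ k, Summable (f k) := fun k => aux_summable χ h0 h1 k
  have h1' : ∑ k ∈ range (n + 1), (n.choose k : ℂ) * (d : ℂ) ^ (n - k) * Tser χ lam k
      = ∑ k ∈ range (n + 1), ∑' m : ℕ, (n.choose k : ℂ) * (d : ℂ) ^ (n - k) * f k m := by
    refine Finset.sum_congr rfl fun k _ => ?_
    exact (tsum_mul_left (a := (n.choose k : ℂ) * (d : ℂ) ^ (n - k))).symm
  rw [h1', ← Summable.tsum_finsetSum (fun k _ => (hsum k).mul_left _), ← tsum_mul_left]
  have h2' : ∀ m : ℕ, (lam : ℂ) ^ d * ∑ k ∈ range (n + 1), (n.choose k : ℂ) * (d : ℂ) ^ (n - k) * f k m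
      = f n (m + d) := by
    intro m
    have hc : ((m + d + 1 : ℕ) : ZMod d) = ((m + 1 : ℕ) : ZMod d) := by
      push_cast [ZMod.natCast_self]; ring
    have hx : ((m + d + 1 : ℕ) : ℂ) = ((m + 1 : ℕ) : ℂ) + (d : ℂ) := by push_cast; ring
    simp only [hf, hc, hx]
    rw [add_pow, Finset.mul_sum, Finset.mul_sum]
    refine Finset.sum_congr rfl fun k hk => ?_
    rw [show m + d + 1 = m + 1 + d by ring, pow_add]
    ring
  rw [tsum_congr h2']
  have h3' := Summable.sum_add_tsum_nat_add (f := f n) d (hsum n)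
  have h4' : ∑' m : ℕ, f n (m + d) = Tser χ lam n - ∑ i ∈ range d, f n i := by
    rw [Tser, ← h3']; ring
  rw [h4']
  congr 1
  have g0 : χ ((0 : ℕ) : ZMod d) * (lam : ℂ) ^ (0:ℕ) * ((0:ℕ) : ℂ) ^ n = 0 := by
    simp [aux_chi_zero hd χ]
  have gd : χ ((d : ℕ) : ZMod d) * (lam : ℂ) ^ d * ((d:ℕ) : ℂ) ^ n = 0 := by
    simp [ZMod.natCast_self, aux_chi_zero hd χ]
  have hs := Finset.sum_range_succ' (fun j => χ ((j : ℕ) : ZMod d) * (lam : ℂ) ^ j * ((j:ℕ) : ℂ) ^ n) d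
  have hs2 := Finset.sum_range_succ (fun j => χ ((j : ℕ) : ZMod d) * (lam : ℂ) ^ j * ((j:ℕ) : ℂ) ^ n) d
  simp only [g0, gd, add_zero] at hs hs2
  rw [hf]
  rw [hs2] at hs
  exact hs.symm

open Finset in
private lemma aux_star2 {d : ℕ} (hd : 2 ≤ d) (χ : DirichletCharacter ℂ d) {lam : ℝ}
    (h0 : 0 < lam) (h1 : lam < 1) (n : ℕ) :
    (lam : ℂ) ^ d * ∑ k ∈ range (n + 1),
        (n.choose k : ℂ) * (d : ℂ) ^ (n - k) * ((k : ℂ) * Tser χ lam (k - 1))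
      = (n : ℂ) * (Tser χ lam (n - 1)
          - ∑ j ∈ range d, χ (j : ZMod d) * (lam : ℂ) ^ j * (j : ℂ) ^ (n - 1)) := by
  cases n with
  | zero => simp
  | succ p =>
    rw [Finset.sum_range_succ']
    simp only [Nat.cast_zero, zero_mul, mul_zero, add_zero, Nat.add_sub_cancel]
    have hcongr : ∑ i ∈ range (p + 1), ((p+1).choose (i+1) : ℂ) * (d : ℂ) ^ (p + 1 - (i+1)) *
          (((i+1 : ℕ)) : ℂ) * Tser χ lam i
        = ((p : ℂ) + 1) * ∑ i ∈ range (p + 1), (p.choose i : ℂ) * (d : ℂ) ^ (p - i) * Tser χ lam i := by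
      rw [Finset.mul_sum]
      refine Finset.sum_congr rfl fun i hi => ?_
      have hch : ((p+1).choose (i+1) * (i+1) : ℕ) = (p + 1) * p.choose i := by
        have := (Nat.add_one_mul_choose_eq p i).symm
        simpa [Nat.succ_eq_add_one] using this
      have hch' : ((p+1).choose (i+1) : ℂ) * ((i : ℂ) + 1) = ((p : ℂ) + 1) * (p.choose i : ℂ) := by
        have := congrArg (Nat.cast : ℕ → ℂ) hch
        push_cast at this
        exact this
      have hsub : p + 1 - (i+1) = p - i := by omega
      rw [hsub]
      push_cast
      linear_combination (d : ℂ) ^ (p - i) * Tser χ lam i * hch'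
    have hassoc : ∑ x ∈ range (p + 1), ((p+1).choose (x+1) : ℂ) * (d : ℂ) ^ (p + 1 - (x+1)) *
          (((x+1 : ℕ)) : ℂ) * Tser χ lam x
        = ∑ x ∈ range (p + 1), ((p+1).choose (x+1) : ℂ) * (d : ℂ) ^ (p + 1 - (x+1)) *
          ((((x+1 : ℕ)) : ℂ) * Tser χ lam x) :=
      Finset.sum_congr rfl fun x _ => by ring
    rw [← hassoc, hcongr]
    have hstar := aux_star hd χ h0 h1 p
    push_cast
    calc (lam : ℂ) ^ d * (((p : ℂ) + 1) * ∑ i ∈ range (p + 1), (p.choose i : ℂ) * (d : ℂ) ^ (p - i) * Tser χ lam i)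
        = ((p : ℂ) + 1) * ((lam : ℂ) ^ d * ∑ i ∈ range (p + 1), (p.choose i : ℂ) * (d : ℂ) ^ (p - i) * Tser χ lam i) := by ring
      _ = ((p : ℂ) + 1) * (Tser χ lam p - ∑ j ∈ range d, χ (j : ZMod d) * (lam : ℂ) ^ j * (j : ℂ) ^ p) := by rw [hstar]

/-- The generalized λ-Bernoulli numbers `B_{n,χ}(λ)` attached to a Dirichlet character `χ`
modulo `d`, defined by the recurrence
`λ^d·∑_{k=0}^{n} C(n,k)·d^{n-k}·B_{k,χ}(λ) - B_{n,χ}(λ)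
  = (log λ)·∑_{j=0}^{d-1} χ(j)·λ^j·j^n + n·∑_{j=0}^{d-1} χ(j)·λ^j·j^{n-1}`
(with `0^0 = 1` and `0·j^{-1} = 0`), which encodes the generating function
`∑_{j=0}^{d-1} χ(j)·λ^j·e^{jt}·(log λ + t)/(λ^d e^{dt} - 1) = ∑_{n≥0} B_{n,χ}(λ)·t^n/n!`. -/
noncomputable def genLambdaBernoulli {d : ℕ} (χ : DirichletCharacter ℂ d) (lam : ℝ) : ℕ → ℂ
  | n =>
    (((Real.log lam : ℂ) * ∑ j ∈ Finset.range d, χ (j : ZMod d) * (lam : ℂ) ^ j * (j : ℂ) ^ n +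
          (n : ℂ) * ∑ j ∈ Finset.range d, χ (j : ZMod d) * (lam : ℂ) ^ j * (j : ℂ) ^ (n - 1)) -
        (lam : ℂ) ^ d *
          ∑ k : Fin n, (n.choose (k : ℕ) : ℂ) * (d : ℂ) ^ (n - (k : ℕ)) *
            genLambdaBernoulli χ lam k) /
      ((lam : ℂ) ^ d - 1)

open Finset in
private lemma aux_key {d : ℕ} (hd : 2 ≤ d) (χ : DirichletCharacter ℂ d) {lam : ℝ}
    (h0 : 0 < lam) (h1 : lam < 1) (n : ℕ) :
    genLambdaBernoulli χ lam n
      = -((Real.log lam : ℂ) * Tser χ lam n + (n : ℂ) * Tser χ lam (n - 1)) := by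
  have hlt : lam ^ d < 1 := pow_lt_one₀ h0.le h1 (by omega)
  have hden : (lam : ℂ) ^ d - 1 ≠ 0 := by
    intro h
    have h' : (lam : ℂ) ^ d = 1 := by linear_combination h
    have : lam ^ d = 1 := by exact_mod_cast h'
    linarith
  induction n using Nat.strong_induction_on with
  | _ n ih =>
    rw [genLambdaBernoulli]
    rw [div_eq_iff hden]
    rw [← Finset.sum_range (fun k => (n.choose k : ℂ) * (d : ℂ) ^ (n - k) * genLambdaBernoulli χ lam k)]
    have hB : ∑ k ∈ range n, (n.choose k : ℂ) * (d : ℂ) ^ (n - k) * genLambdaBernoulli χ lam k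
        = ∑ k ∈ range n, (n.choose k : ℂ) * (d : ℂ) ^ (n - k) *
            (-((Real.log lam : ℂ) * Tser χ lam k + (k : ℂ) * Tser χ lam (k - 1))) :=
      Finset.sum_congr rfl fun k hk => by rw [ih k (Finset.mem_range.mp hk)]
    rw [hB]
    have h5 : (lam : ℂ) ^ d * ∑ k ∈ range (n + 1), (n.choose k : ℂ) * (d : ℂ) ^ (n - k) *
          (-((Real.log lam : ℂ) * Tser χ lam k + (k : ℂ) * Tser χ lam (k - 1)))
        = -((Real.log lam : ℂ) * (Tser χ lam n - ∑ j ∈ range d, χ (j : ZMod d) * (lam : ℂ) ^ j * (j : ℂ) ^ n)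
            + (n : ℂ) * (Tser χ lam (n - 1) - ∑ j ∈ range d, χ (j : ZMod d) * (lam : ℂ) ^ j * (j : ℂ) ^ (n - 1))) := by
      rw [← aux_star hd χ h0 h1 n, ← aux_star2 hd χ h0 h1 n]
      rw [Finset.mul_sum, Finset.mul_sum, Finset.mul_sum, Finset.mul_sum,
        ← Finset.sum_add_distrib, ← Finset.sum_neg_distrib]
      exact Finset.sum_congr rfl fun k _ => by ring
    have h6 : ∑ k ∈ range (n + 1), (n.choose k : ℂ) * (d : ℂ) ^ (n - k) *
          (-((Real.log lam : ℂ) * Tser χ lam k + (k : ℂ) * Tser χ lam (k - 1)))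
        = (∑ k ∈ range n, (n.choose k : ℂ) * (d : ℂ) ^ (n - k) *
          (-((Real.log lam : ℂ) * Tser χ lam k + (k : ℂ) * Tser χ lam (k - 1))))
          + (-((Real.log lam : ℂ) * Tser χ lam n + (n : ℂ) * Tser χ lam (n - 1))) := by
      rw [Finset.sum_range_succ, Nat.choose_self, Nat.sub_self]
      push_cast
      ring
    rw [h6] at h5
    linear_combination -h5

/-- The Dirichlet-type λ-L-function, for real `0 < λ < 1` and a Dirichlet character `χ` mod `d`:
`L_λ(s, χ) = ∑_{m≥1} χ(m)·λ^m·m^{-s} - (log λ/(s - 1))·∑_{m≥1} χ(m)·λ^m·m^{1-s}`,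
complex powers of the positive integer `m` being taken via the real logarithm. -/
noncomputable def lambdaLFunction {d : ℕ} (χ : DirichletCharacter ℂ d) (lam : ℝ) (s : ℂ) : ℂ :=
  (∑' m : ℕ, χ ((m + 1 : ℕ) : ZMod d) * (lam : ℂ) ^ (m + 1) * ((m + 1 : ℕ) : ℂ) ^ (-s)) -
    ((Real.log lam : ℂ) / (s - 1)) *
      ∑' m : ℕ, χ ((m + 1 : ℕ) : ZMod d) * (lam : ℂ) ^ (m + 1) * ((m + 1 : ℕ) : ℂ) ^ (1 - s)

/-- for an integer `d ≥ 2`, a Dirichlet character `χ` mod `d`, real `0 < λ < 1`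
and an integer `k ≥ 1`, `L_λ(1 - k, χ) = -B_{k,χ}(λ)/k`: the Dirichlet-type λ-L-function
interpolates the generalized λ-Bernoulli numbers at non-positive integers. -/
theorem lambdaLFunction_interpolation (d : ℕ) (hd : 2 ≤ d) (χ : DirichletCharacter ℂ d)
    (lam : ℝ) (h0 : 0 < lam) (h1 : lam < 1) (k : ℕ) (hk : 1 ≤ k) :
    lambdaLFunction χ lam (1 - (k : ℂ)) = -genLambdaBernoulli χ lam k / (k : ℂ) := by
  have hk0 : (k : ℂ) ≠ 0 := Nat.cast_ne_zero.mpr (by omega)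
  rw [lambdaLFunction]
  have e1 : (∑' m : ℕ, χ ((m + 1 : ℕ) : ZMod d) * (lam : ℂ) ^ (m + 1) *
        ((m + 1 : ℕ) : ℂ) ^ (-(1 - (k : ℂ)))) = Tser χ lam (k - 1) := by
    rw [Tser]
    refine tsum_congr fun m => ?_
    congr 1
    have h : -(1 - (k : ℂ)) = ((k - 1 : ℕ) : ℂ) := by
      rw [Nat.cast_sub hk]; push_cast; ring
    rw [h, Complex.cpow_natCast]
  have e2 : (∑' m : ℕ, χ ((m + 1 : ℕ) : ZMod d) * (lam : ℂ) ^ (m + 1) *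
        ((m + 1 : ℕ) : ℂ) ^ ((1 : ℂ) - (1 - (k : ℂ)))) = Tser χ lam k := by
    rw [Tser]
    refine tsum_congr fun m => ?_
    congr 1
    have h : (1 : ℂ) - (1 - (k : ℂ)) = ((k : ℕ) : ℂ) := by ring
    rw [h, Complex.cpow_natCast]
  rw [e1, e2, aux_key hd χ h0 h1 k]
  have hsub : (1 - (k : ℂ)) - 1 = -(k : ℂ) := by ring
  rw [hsub]
  have hk0' : -(k : ℂ) ≠ 0 := neg_ne_zero.mpr hk0
  field_simp
  ring
end
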